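/- Let D be a positive definite density matrix and f a standard operator monotone function. Then the monotone-metric (generalized) Cramér–Rao inequality holds: if A = (A₁,...,A_m) are self-adjoint matrices and L_i = (J_D^f)⁻¹(∂_i D_θ) satisfy Tr A_i J_D^f(L_j) = δ_{ij}, then the m×m matrices C(D)_{ij} = Tr A_i J_D^f(A_j) and J(D)_{ij} = Tr L_i J_D^f(L_j) satisfy C(D) ≥ J(D)⁻¹ (as positive semidefinite matrices), provided J(D) is invertible. -/

import Mathlib

open Matrix
open scoped ComplexOrder

/-- `f` applied to a Hermitian matrix via the spectral theorem. -/
noncomputable def hermApply {n : ℕ} (f : ℝ → ℝ) (A : Matrix (Fin n) (Fin n) ℂ)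
    (hA : A.IsHermitian) : Matrix (Fin n) (Fin n) ℂ :=
  (hA.eigenvectorUnitary : Matrix (Fin n) (Fin n) ℂ) *
    Matrix.diagonal (fun i => ((f (hA.eigenvalues i) : ℝ) : ℂ)) *
    (star hA.eigenvectorUnitary : Matrix (Fin n) (Fin n) ℂ)

/-- `f : (0,∞) → (0,∞)` is operator monotone. -/
def OperatorMonotoneOn (f : ℝ → ℝ) : Prop :=
  ∀ (n : ℕ) (A B : Matrix (Fin n) (Fin n) ℂ) (hA : A.PosDef) (hB : B.PosDef),
    (B - A).PosSemidef →
      (hermApply f B hB.1 - hermApply f A hA.1).PosSemidef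

/-- The map `J_D^f` in the eigenbasis of a positive definite `D`. -/
noncomputable def Jmap {n : ℕ} (f : ℝ → ℝ) (D : Matrix (Fin n) (Fin n) ℂ)
    (hD : D.IsHermitian) (B : Matrix (Fin n) (Fin n) ℂ) : Matrix (Fin n) (Fin n) ℂ :=
  let U : Matrix (Fin n) (Fin n) ℂ := hD.eigenvectorUnitary
  U * (Matrix.of fun i j =>
      ((hD.eigenvalues j * f (hD.eigenvalues i / hD.eigenvalues j) : ℝ) : ℂ) *
        (star U * B * U) i j) * star U

open Complex
open scoped ComplexConjugate

section Aux

private noncomputable def wvec {ι : Type*} [Fintype ι] (c : ι → ℝ) (x : ι → ℂ) :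
    EuclideanSpace ℂ ι := WithLp.toLp 2 (fun i => (Real.sqrt (c i) : ℂ) * x i)

private lemma wvec_inner {ι : Type*} [Fintype ι] (c : ι → ℝ) (hc : ∀ i, 0 ≤ c i)
    (x y : ι → ℂ) :
    (inner ℂ (wvec c x) (wvec c y) : ℂ) = ∑ i, (c i : ℂ) * conj (x i) * y i := by
  rw [PiLp.inner_apply]
  refine Finset.sum_congr rfl fun i _ => ?_
  simp only [wvec, PiLp.toLp_apply, RCLike.inner_apply, _root_.map_mul, Complex.conj_ofReal]
  have : (Real.sqrt (c i) : ℂ) * (Real.sqrt (c i) : ℂ) = (c i : ℂ) := by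
    rw [← Complex.ofReal_mul, Real.mul_self_sqrt (hc i)]
  linear_combination conj (x i) * y i * this

private lemma weighted_nonneg {ι : Type*} [Fintype ι] (c : ι → ℝ) (hc : ∀ i, 0 ≤ c i)
    (x : ι → ℂ) : 0 ≤ (∑ i, (c i : ℂ) * conj (x i) * x i).re := by
  rw [← wvec_inner c hc]
  have := @inner_self_nonneg ℂ _ _ _ _ (wvec c x)
  rwa [RCLike.re_to_complex] at this

private lemma weighted_cs {ι : Type*} [Fintype ι] (c : ι → ℝ) (hc : ∀ i, 0 ≤ c i)
    (x y : ι → ℂ) :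
    (∑ i, (c i : ℂ) * conj (x i) * y i).re ^ 2 ≤
      (∑ i, (c i : ℂ) * conj (x i) * x i).re * (∑ i, (c i : ℂ) * conj (y i) * y i).re := by
  rw [← wvec_inner c hc, ← wvec_inner c hc, ← wvec_inner c hc]
  set a := wvec c x; set b := wvec c y
  have h1 : |(inner ℂ a b : ℂ).re| ≤ ‖(inner ℂ a b : ℂ)‖ := Complex.abs_re_le_norm _
  have h2 : ‖(inner ℂ a b : ℂ)‖ ≤ ‖a‖ * ‖b‖ := norm_inner_le_norm a b
  have h3 := @inner_self_eq_norm_sq ℂ _ _ _ _ a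
  have h4 := @inner_self_eq_norm_sq ℂ _ _ _ _ b
  rw [RCLike.re_to_complex] at h3 h4
  calc (inner ℂ a b : ℂ).re ^ 2 = |(inner ℂ a b : ℂ).re| ^ 2 := (_root_.sq_abs _).symm
    _ ≤ (‖a‖ * ‖b‖) ^ 2 := pow_le_pow_left₀ (abs_nonneg _) (h1.trans h2) 2
    _ = (inner ℂ a a : ℂ).re * (inner ℂ b b : ℂ).re := by rw [h3, h4]; ring

private lemma Jmap_add {n : ℕ} (f : ℝ → ℝ) (D : Matrix (Fin n) (Fin n) ℂ)
    (hD : D.IsHermitian) (B C : Matrix (Fin n) (Fin n) ℂ) :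
    Jmap f D hD (B + C) = Jmap f D hD B + Jmap f D hD C := by
  ext i j
  simp [Jmap, Matrix.mul_apply, Matrix.add_apply, mul_add, add_mul, Finset.sum_add_distrib]

private lemma Jmap_smul {n : ℕ} (f : ℝ → ℝ) (D : Matrix (Fin n) (Fin n) ℂ)
    (hD : D.IsHermitian) (a : ℂ) (B : Matrix (Fin n) (Fin n) ℂ) :
    Jmap f D hD (a • B) = a • Jmap f D hD B := by
  show _ * _ * _ = _
  set U : Matrix (Fin n) (Fin n) ℂ := (hD.eigenvectorUnitary : Matrix (Fin n) (Fin n) ℂ)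
  set c : Fin n → Fin n → ℂ := fun i j =>
    ((hD.eigenvalues j * f (hD.eigenvalues i / hD.eigenvalues j) : ℝ) : ℂ)
  rw [show star U * (a • B) * U = a • (star U * B * U) by
        rw [Matrix.mul_smul, Matrix.smul_mul]]
  rw [show (Matrix.of fun i j => c i j * (a • (star U * B * U)) i j)
        = a • Matrix.of fun i j => c i j * (star U * B * U) i j by
      ext i j
      simp only [Matrix.of_apply, Matrix.smul_apply, smul_eq_mul]
      ring]
  rw [Matrix.mul_smul, Matrix.smul_mul]
  rfl

/-- `Jmap` as a linear map. -/
private noncomputable def JmapL {n : ℕ} (f : ℝ → ℝ) (D : Matrix (Fin n) (Fin n) ℂ)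
    (hD : D.IsHermitian) : Matrix (Fin n) (Fin n) ℂ →ₗ[ℂ] Matrix (Fin n) (Fin n) ℂ where
  toFun := Jmap f D hD
  map_add' := Jmap_add f D hD
  map_smul' := Jmap_smul f D hD

private lemma trace_formula {n : ℕ} (f : ℝ → ℝ) (D : Matrix (Fin n) (Fin n) ℂ)
    (hD : D.IsHermitian) (X Y : Matrix (Fin n) (Fin n) ℂ) (hX : X.IsHermitian) :
    (X * Jmap f D hD Y).trace = ∑ p : Fin n × Fin n,
      ((hD.eigenvalues p.2 * f (hD.eigenvalues p.1 / hD.eigenvalues p.2) : ℝ) : ℂ) *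
        conj ((star (hD.eigenvectorUnitary : Matrix (Fin n) (Fin n) ℂ) * X *
          (hD.eigenvectorUnitary : Matrix (Fin n) (Fin n) ℂ)) p.1 p.2) *
        ((star (hD.eigenvectorUnitary : Matrix (Fin n) (Fin n) ℂ) * Y *
          (hD.eigenvectorUnitary : Matrix (Fin n) (Fin n) ℂ)) p.1 p.2) := by
  set U : Matrix (Fin n) (Fin n) ℂ := (hD.eigenvectorUnitary : Matrix (Fin n) (Fin n) ℂ)
  set c : Fin n → Fin n → ℂ := fun i j =>
    ((hD.eigenvalues j * f (hD.eigenvalues i / hD.eigenvalues j) : ℝ) : ℂ) with hc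
  set P : Matrix (Fin n) (Fin n) ℂ := star U * X * U with hP
  set Q : Matrix (Fin n) (Fin n) ℂ := star U * Y * U with hQ
  set M : Matrix (Fin n) (Fin n) ℂ := Matrix.of fun i j => c i j * Q i j with hM
  have hJ : Jmap f D hD Y = U * M * star U := rfl
  have hX' : P.IsHermitian := by
    rw [hP, Matrix.star_eq_conjTranspose]
    exact Matrix.isHermitian_conjTranspose_mul_mul U hX
  rw [hJ, show X * (U * M * star U) = (X * U) * M * star U by rw [← mul_assoc, ← mul_assoc],
    Matrix.trace_mul_cycle, show star U * (X * U) = P from (mul_assoc _ _ _).symm]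
  rw [Fintype.sum_prod_type]
  simp only [Matrix.trace, Matrix.diag_apply, Matrix.mul_apply, hM, Matrix.of_apply]
  rw [Finset.sum_comm]
  refine Finset.sum_congr rfl fun i _ => Finset.sum_congr rfl fun j _ => ?_
  have h2 : conj (P i j) = P j i := by
    rw [← RCLike.star_def]; exact hX'.apply j i
  rw [h2]
  ring

end Aux

/-- generalized (monotone-metric) Cramér–Rao inequality:  if the
self-adjoint estimators `A₁,…,A_m` and the logarithmic derivatives `L₁,…,L_m` satisfy
the local unbiasedness conditions `Tr Aᵢ J_D^f(Lⱼ) = δᵢⱼ`, then the covariance matrix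
`C(D)ᵢⱼ = Tr Aᵢ J_D^f(Aⱼ)` and the Fisher information matrix
`J(D)ᵢⱼ = Tr Lᵢ J_D^f(Lⱼ)` satisfy `C(D) ≥ J(D)⁻¹`, provided `J(D)` is invertible. -/
theorem stmt14 {n m : ℕ} (f : ℝ → ℝ) (hfpos : ∀ x > 0, 0 < f x)
    (hmono : OperatorMonotoneOn f) (hf1 : f 1 = 1)
    (hsymm : ∀ x > (0 : ℝ), x * f (1 / x) = f x)
    (D : Matrix (Fin n) (Fin n) ℂ) (hD : D.PosDef) (hDtr : D.trace = 1)
    (A L : Fin m → Matrix (Fin n) (Fin n) ℂ)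
    (hA : ∀ i, (A i).IsHermitian) (hL : ∀ i, (L i).IsHermitian)
    (hunbiased : ∀ i j, (A i * Jmap f D hD.1 (L j)).trace = if i = j then 1 else 0)
    (CD JD : Matrix (Fin m) (Fin m) ℝ)
    (hCD : ∀ i j, CD i j = (A i * Jmap f D hD.1 (A j)).trace.re)
    (hJD : ∀ i j, JD i j = (L i * Jmap f D hD.1 (L j)).trace.re)
    (hJinv : IsUnit JD.det) :
    (CD - JD⁻¹).PosSemidef := by
  classical
  -- the weight function and its positivity
  set cR : Fin n × Fin n → ℝ := fun p =>
    hD.1.eigenvalues p.2 * f (hD.1.eigenvalues p.1 / hD.1.eigenvalues p.2) with hcR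
  have hev : ∀ i, 0 < hD.1.eigenvalues i := fun i => hD.eigenvalues_pos i
  have hcnn : ∀ p, 0 ≤ cR p := fun p =>
    le_of_lt (mul_pos (hev p.2) (hfpos _ (div_pos (hev p.1) (hev p.2))))
  set U : Matrix (Fin n) (Fin n) ℂ := (hD.1.eigenvectorUnitary : Matrix (Fin n) (Fin n) ℂ)
  set col : Matrix (Fin n) (Fin n) ℂ → (Fin n × Fin n) → ℂ :=
    fun X p => (star U * X * U) p.1 p.2 with hcol
  -- trace formula specialization
  have tf : ∀ X Y : Matrix (Fin n) (Fin n) ℂ, X.IsHermitian →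
      (X * Jmap f D hD.1 Y).trace = ∑ p : Fin n × Fin n,
        (cR p : ℂ) * conj (col X p) * col Y p := fun X Y hX =>
    trace_formula f D hD.1 X Y hX
  -- basic properties of the sesquilinear form
  have Fnn : ∀ X : Matrix (Fin n) (Fin n) ℂ, X.IsHermitian →
      0 ≤ (X * Jmap f D hD.1 X).trace.re := by
    intro X hX
    rw [tf X X hX]
    exact weighted_nonneg cR hcnn (col X)
  have Fcs : ∀ X Y : Matrix (Fin n) (Fin n) ℂ, X.IsHermitian → Y.IsHermitian →
      (X * Jmap f D hD.1 Y).trace.re ^ 2 ≤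
        (X * Jmap f D hD.1 X).trace.re * (Y * Jmap f D hD.1 Y).trace.re := by
    intro X Y hX hY
    rw [tf X Y hX, tf X X hX, tf Y Y hY]
    exact weighted_cs cR hcnn (col X) (col Y)
  have Fsymm : ∀ X Y : Matrix (Fin n) (Fin n) ℂ, X.IsHermitian → Y.IsHermitian →
      (X * Jmap f D hD.1 Y).trace.re = (Y * Jmap f D hD.1 X).trace.re := by
    intro X Y hX hY
    rw [tf X Y hX, tf Y X hY]
    have : (∑ p : Fin n × Fin n, (cR p : ℂ) * conj (col Y p) * col X p)
        = conj (∑ p : Fin n × Fin n, (cR p : ℂ) * conj (col X p) * col Y p) := by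
      rw [map_sum]
      refine Finset.sum_congr rfl fun p _ => ?_
      simp only [_root_.map_mul, Complex.conj_ofReal, Complex.conj_conj]
      ring
    rw [this, Complex.conj_re]
  -- bilinear expansion
  have hexp : ∀ (P Q : Fin m → Matrix (Fin n) (Fin n) ℂ) (x y : Fin m → ℝ),
      ((∑ i, ((x i : ℝ) : ℂ) • P i) * Jmap f D hD.1 (∑ j, ((y j : ℝ) : ℂ) • Q j)).trace
        = ∑ i, ∑ j, ((x i * y j : ℝ) : ℂ) * (P i * Jmap f D hD.1 (Q j)).trace := by
    intro P Q x y
    have hJ : Jmap f D hD.1 (∑ j, ((y j : ℝ) : ℂ) • Q j)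
        = ∑ j, ((y j : ℝ) : ℂ) • Jmap f D hD.1 (Q j) :=
      calc Jmap f D hD.1 (∑ j, ((y j : ℝ) : ℂ) • Q j)
          = ∑ j, Jmap f D hD.1 (((y j : ℝ) : ℂ) • Q j) :=
            map_sum (JmapL f D hD.1) (fun j => ((y j : ℝ) : ℂ) • Q j) Finset.univ
        _ = ∑ j, ((y j : ℝ) : ℂ) • Jmap f D hD.1 (Q j) :=
            Finset.sum_congr rfl fun j _ => Jmap_smul f D hD.1 _ (Q j)
    rw [hJ]
    simp only [Finset.sum_mul, Finset.mul_sum, Matrix.smul_mul, Matrix.mul_smul,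
      Matrix.trace_sum, Matrix.trace_smul, smul_smul, smul_eq_mul, Complex.ofReal_mul]
    rw [Finset.sum_comm]
    refine Finset.sum_congr rfl fun i _ => Finset.sum_congr rfl fun j _ => ?_
    ring
  -- hermitian combinations
  have hSA : ∀ x : Fin m → ℝ, (∑ i, ((x i : ℝ) : ℂ) • A i).IsHermitian := by
    intro x
    show _ = _
    rw [Matrix.conjTranspose_sum]
    refine Finset.sum_congr rfl fun i _ => ?_
    rw [Matrix.conjTranspose_smul, (hA i).eq, star_def, Complex.conj_ofReal]
  have hSL : ∀ x : Fin m → ℝ, (∑ i, ((x i : ℝ) : ℂ) • L i).IsHermitian := by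
    intro x
    show _ = _
    rw [Matrix.conjTranspose_sum]
    refine Finset.sum_congr rfl fun i _ => ?_
    rw [Matrix.conjTranspose_smul, (hL i).eq, star_def, Complex.conj_ofReal]
  -- quadratic form identities
  have q1 : ∀ x : Fin m → ℝ, x ⬝ᵥ CD *ᵥ x
      = ((∑ i, ((x i : ℝ) : ℂ) • A i) * Jmap f D hD.1 (∑ i, ((x i : ℝ) : ℂ) • A i)).trace.re := by
    intro x
    rw [hexp A A x x, Complex.re_sum]
    simp only [Complex.re_sum, Complex.re_ofReal_mul]
    simp only [dotProduct, Matrix.mulVec, dotProduct]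
    refine Finset.sum_congr rfl fun i _ => ?_
    rw [Finset.mul_sum]
    refine Finset.sum_congr rfl fun j _ => ?_
    rw [hCD i j]; ring
  have q2 : ∀ x : Fin m → ℝ, x ⬝ᵥ JD *ᵥ x
      = ((∑ i, ((x i : ℝ) : ℂ) • L i) * Jmap f D hD.1 (∑ i, ((x i : ℝ) : ℂ) • L i)).trace.re := by
    intro x
    rw [hexp L L x x, Complex.re_sum]
    simp only [Complex.re_sum, Complex.re_ofReal_mul]
    simp only [dotProduct, Matrix.mulVec, dotProduct]
    refine Finset.sum_congr rfl fun i _ => ?_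
    rw [Finset.mul_sum]
    refine Finset.sum_congr rfl fun j _ => ?_
    rw [hJD i j]; ring
  have qc : ∀ x y : Fin m → ℝ, x ⬝ᵥ y
      = ((∑ i, ((x i : ℝ) : ℂ) • A i) * Jmap f D hD.1 (∑ j, ((y j : ℝ) : ℂ) • L j)).trace.re := by
    intro x y
    rw [hexp A L x y, Complex.re_sum]
    simp only [Complex.re_sum, Complex.re_ofReal_mul]
    have : ∀ i j, (A i * Jmap f D hD.1 (L j)).trace.re = if i = j then 1 else 0 := by
      intro i j
      rw [hunbiased i j]
      split <;> simp
    simp only [this]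
    simp [dotProduct, mul_ite, mul_one, mul_zero, Finset.sum_ite_eq]
  -- the Cauchy–Schwarz inequality for the quadratic forms
  have hCS : ∀ x y : Fin m → ℝ, (x ⬝ᵥ y) ^ 2 ≤ (x ⬝ᵥ CD *ᵥ x) * (y ⬝ᵥ JD *ᵥ y) := by
    intro x y
    rw [qc x y, q1 x, q2 y]
    exact Fcs _ _ (hSA x) (hSL y)
  have hCDnn : ∀ x : Fin m → ℝ, 0 ≤ x ⬝ᵥ CD *ᵥ x := by
    intro x; rw [q1 x]; exact Fnn _ (hSA x)
  have hJDnn : ∀ x : Fin m → ℝ, 0 ≤ x ⬝ᵥ JD *ᵥ x := by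
    intro x; rw [q2 x]; exact Fnn _ (hSL x)
  -- symmetry of CD and JD
  have hCDsym : CD.IsHermitian := by
    show _ = _
    ext i j
    rw [Matrix.conjTranspose_apply, star_trivial, hCD i j, hCD j i]
    exact Fsymm _ _ (hA j) (hA i)
  have hJDsym : JD.IsHermitian := by
    show _ = _
    ext i j
    rw [Matrix.conjTranspose_apply, star_trivial, hJD i j, hJD j i]
    exact Fsymm _ _ (hL j) (hL i)
  have hstar : ∀ x : Fin m → ℝ, star x = x := fun x => funext fun i => star_trivial _
  -- JD is positive definite
  have hJDpsd : JD.PosSemidef := PosSemidef.of_dotProduct_mulVec_nonneg hJDsym (fun x => by rw [hstar x]; exact hJDnn x)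
  have hJDpd : JD.PosDef := by
    refine PosDef.of_dotProduct_mulVec_pos hJDsym fun x hx => ?_
    rw [hstar x]
    rcases lt_or_eq_of_le (hJDnn x) with h | h
    · exact h
    · exfalso
      have h0 : star x ⬝ᵥ JD *ᵥ x = 0 := by rw [hstar x]; exact h.symm
      have hzero : JD *ᵥ x = 0 := (hJDpsd.dotProduct_mulVec_zero_iff x).1 h0
      apply hx
      have : JD⁻¹ *ᵥ (JD *ᵥ x) = x := by
        rw [Matrix.mulVec_mulVec, Matrix.nonsing_inv_mul JD hJinv, Matrix.one_mulVec]
      rw [← this, hzero, Matrix.mulVec_zero]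
  have hJinvpd : (JD⁻¹).PosDef := hJDpd.inv
  -- conclusion
  refine PosSemidef.of_dotProduct_mulVec_nonneg (hCDsym.sub hJinvpd.1) fun v => ?_
  rw [hstar v]
  rw [Matrix.sub_mulVec, dotProduct_sub]
  rcases eq_or_ne v 0 with rfl | hv
  · simp
  · set t : ℝ := v ⬝ᵥ JD⁻¹ *ᵥ v with ht
    have htpos : 0 < t := by
      have := hJinvpd.dotProduct_mulVec_pos hv
      rwa [hstar v] at this
    have key := hCS v (JD⁻¹ *ᵥ v)
    have h1 : JD *ᵥ (JD⁻¹ *ᵥ v) = v := by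
      rw [Matrix.mulVec_mulVec, Matrix.mul_nonsing_inv JD hJinv, Matrix.one_mulVec]
    rw [h1] at key
    have h2 : (JD⁻¹ *ᵥ v) ⬝ᵥ v = t := by rw [dotProduct_comm, ht]
    rw [h2] at key
    -- key : t ^ 2 ≤ (v ⬝ᵥ CD *ᵥ v) * t
    have : t ≤ v ⬝ᵥ CD *ᵥ v := by nlinarith
    linarith
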